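/- A ring R is twin-good if and only if R/J(R) is twin-good, where J(R) is the Jacobson radical of R. -/

import Mathlib

lemma left_inv_of_sub_one_mem {R : Type*} [Ring R] (r : R)
    (hr : r - 1 ∈ Ideal.jacobson (⊥ : Ideal R)) :
    ∃ z : R, z * r = 1 ∧ z - 1 ∈ Ideal.jacobson (⊥ : Ideal R) := by
  obtain ⟨z, hz⟩ := Ideal.mem_jacobson_iff.mp hr 1
  rw [Ideal.mem_bot] at hz
  have hzr : z * r = 1 := by
    have h1 : z * 1 * (r - 1) + z - 1 = z * r - 1 := by noncomm_ring
    rw [h1, sub_eq_zero] at hz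
    exact hz
  refine ⟨z, hzr, ?_⟩
  have h2 : z - 1 = -(z * (r - 1)) := by
    have : z * (r - 1) = z * r - z := by noncomm_ring
    rw [this, hzr, neg_sub]
  rw [h2]
  exact neg_mem (Ideal.mul_mem_left _ z hr)

lemma isUnit_of_sub_one_mem_jacobson_bot' {R : Type*} [Ring R] (r : R)
    (hr : r - 1 ∈ Ideal.jacobson (⊥ : Ideal R)) : IsUnit r := by
  obtain ⟨z, hzr, hz1⟩ := left_inv_of_sub_one_mem r hr
  obtain ⟨w, hwz, _⟩ := left_inv_of_sub_one_mem z hz1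
  have hwr : w = r := by
    calc w = w * (z * r) := by rw [hzr, mul_one]
    _ = (w * z) * r := by rw [mul_assoc]
    _ = r := by rw [hwz, one_mul]
  exact ⟨⟨r, z, hwr ▸ hwz, hzr⟩, rfl⟩

section Aux

variable {R : Type*} [Ring R]

local notation "J" => TwoSidedIdeal.jacobson (⊥ : TwoSidedIdeal R)

lemma mem_J_iff {x : R} : x ∈ (TwoSidedIdeal.jacobson (⊥ : TwoSidedIdeal R)) ↔
    x ∈ Ideal.jacobson (⊥ : Ideal R) := by
  have hb : TwoSidedIdeal.asIdeal (⊥ : TwoSidedIdeal R) = (⊥ : Ideal R) := by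
    ext y
    simp [TwoSidedIdeal.mem_asIdeal, TwoSidedIdeal.mem_bot, Ideal.mem_bot]
  rw [← TwoSidedIdeal.mem_asIdeal, TwoSidedIdeal.asIdeal_jacobson, hb]

lemma isUnit_of_quot {a : R}
    (h : IsUnit ((TwoSidedIdeal.jacobson (⊥ : TwoSidedIdeal R)).ringCon.mk' a)) :
    IsUnit a := by
  obtain ⟨u, hu⟩ := h
  obtain ⟨b, hb⟩ := Quotient.exists_rep (↑u⁻¹ : (J).ringCon.Quotient)
  have hb' : (J).ringCon.mk' b = ↑u⁻¹ := hb
  have hab : (J).ringCon.mk' (a * b) = 1 := by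
    rw [map_mul, ← hu, hb', Units.mul_inv]
  have hba : (J).ringCon.mk' (b * a) = 1 := by
    rw [map_mul, hb', ← hu, Units.inv_mul]
  have habJ : a * b - 1 ∈ (J) := by
    rw [← TwoSidedIdeal.rel_iff]
    have : ((a * b : R) : (J).ringCon.Quotient) = ((1 : R) : (J).ringCon.Quotient) := by
      simpa using hab
    exact Quotient.eq''.mp this
  have hbaJ : b * a - 1 ∈ (J) := by
    rw [← TwoSidedIdeal.rel_iff]
    have : ((b * a : R) : (J).ringCon.Quotient) = ((1 : R) : (J).ringCon.Quotient) := by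
      simpa using hba
    exact Quotient.eq''.mp this
  have hab1 : IsUnit (a * b) :=
    isUnit_of_sub_one_mem_jacobson_bot' _ (mem_J_iff.mp habJ)
  have hba1 : IsUnit (b * a) :=
    isUnit_of_sub_one_mem_jacobson_bot' _ (mem_J_iff.mp hbaJ)
  set c := b * ↑hab1.unit⁻¹ with hc
  set d := ↑hba1.unit⁻¹ * b with hd
  have hac : a * c = 1 := by
    rw [hc, ← mul_assoc]
    exact hab1.mul_val_inv
  have hda : d * a = 1 := by
    rw [hd, mul_assoc]
    exact hba1.val_inv_mul
  have hcd : c = d := by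
    calc c = (d * a) * c := by rw [hda, one_mul]
    _ = d * (a * c) := by rw [mul_assoc]
    _ = d := by rw [hac, mul_one]
  exact ⟨⟨a, c, hac, by rw [hcd]; exact hda⟩, rfl⟩

end Aux

/-- A ring `R` is twin-good if and only if `R/J(R)` is twin-good, where `J(R)` is
the Jacobson radical of `R`. -/
theorem twinGood_iff_quotient_jacobson (R : Type*) [Ring R] :
    (∀ x : R, ∃ u : R, IsUnit u ∧ IsUnit (x + u) ∧ IsUnit (x - u)) ↔
    (∀ x : (TwoSidedIdeal.jacobson (⊥ : TwoSidedIdeal R)).ringCon.Quotient,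
      ∃ u : (TwoSidedIdeal.jacobson (⊥ : TwoSidedIdeal R)).ringCon.Quotient,
        IsUnit u ∧ IsUnit (x + u) ∧ IsUnit (x - u)) := by
  set f := (TwoSidedIdeal.jacobson (⊥ : TwoSidedIdeal R)).ringCon.mk'
  constructor
  · intro h x
    obtain ⟨a, rfl⟩ := Quotient.exists_rep x
    obtain ⟨u, hu, hau, hau'⟩ := h a
    refine ⟨f u, hu.map f, ?_, ?_⟩
    · exact hau.map f
    · exact hau'.map f
  · intro h x
    obtain ⟨v, hv, hxv, hxv'⟩ := h (f x)
    obtain ⟨u, hu⟩ := Quotient.exists_rep v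
    have hu' : f u = v := hu
    refine ⟨u, isUnit_of_quot (by rw [hu']; exact hv), ?_, ?_⟩
    · exact isUnit_of_quot (by rw [map_add, hu']; exact hxv)
    · exact isUnit_of_quot (by rw [map_sub, hu']; exact hxv')
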